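/- The number of 123-avoiding permutations of {1,…,n} equals the n-th Catalan number c_n. -/

import Mathlib

open Finset

/-- A permutation of `{1,…,n}` (modeled on `Fin n`) is 132-avoiding if there are
no indices `i < j < l` with `π i < π l < π j`. -/
def avoids132 {n : ℕ} (π : Equiv.Perm (Fin n)) : Prop :=
  ∀ i j l : Fin n, i < j → j < l → ¬(π i < π l ∧ π l < π j)

instance avoids132.dec {n : ℕ} : DecidablePred (avoids132 (n := n)) := fun π => by
  unfold avoids132; infer_instance

/-- A permutation is 123-avoiding if there are no indices `i < j < l` with
`π i < π j < π l`. -/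
def avoids123 {n : ℕ} (π : Equiv.Perm (Fin n)) : Prop :=
  ∀ i j l : Fin n, i < j → j < l → ¬(π i < π j ∧ π j < π l)

instance avoids123.dec {n : ℕ} : DecidablePred (avoids123 (n := n)) := fun π => by
  unfold avoids123; infer_instance

/-- The finite set of 132-avoiding permutations of `{1,…,n}`. -/
def AV132 (n : ℕ) : Finset (Equiv.Perm (Fin n)) := univ.filter avoids132

/-- The finite set of 123-avoiding permutations of `{1,…,n}`. -/
def AV123 (n : ℕ) : Finset (Equiv.Perm (Fin n)) := univ.filter avoids123

/-- number of non-inversions: pairs `i < j` with `π i < π j` (pattern 12). -/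
def a12 {n : ℕ} (π : Equiv.Perm (Fin n)) : ℕ :=
  (univ.filter (fun p : Fin n × Fin n => p.1 < p.2 ∧ π p.1 < π p.2)).card

/-- number of inversions: pairs `i < j` with `π j < π i` (pattern 21). -/
def a21 {n : ℕ} (π : Equiv.Perm (Fin n)) : ℕ :=
  (univ.filter (fun p : Fin n × Fin n => p.1 < p.2 ∧ π p.2 < π p.1)).card

/-- occurrences of pattern 123: triples `i < j < l` with `π i < π j < π l`. -/
def a123 {n : ℕ} (π : Equiv.Perm (Fin n)) : ℕ :=
  (univ.filter (fun p : Fin n × Fin n × Fin n =>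
    p.1 < p.2.1 ∧ p.2.1 < p.2.2 ∧ π p.1 < π p.2.1 ∧ π p.2.1 < π p.2.2)).card

/-- occurrences of pattern 321: triples `i < j < l` with `π l < π j < π i`. -/
def a321 {n : ℕ} (π : Equiv.Perm (Fin n)) : ℕ :=
  (univ.filter (fun p : Fin n × Fin n × Fin n =>
    p.1 < p.2.1 ∧ p.2.1 < p.2.2 ∧ π p.2.2 < π p.2.1 ∧ π p.2.1 < π p.1)).card

/-- occurrences of pattern 231: triples `i < j < l` with `π l < π i < π j`. -/
def a231 {n : ℕ} (π : Equiv.Perm (Fin n)) : ℕ :=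
  (univ.filter (fun p : Fin n × Fin n × Fin n =>
    p.1 < p.2.1 ∧ p.2.1 < p.2.2 ∧ π p.2.2 < π p.1 ∧ π p.1 < π p.2.1)).card

/-- occurrences of pattern 213: triples `i < j < l` with `π j < π i < π l`. -/
def a213 {n : ℕ} (π : Equiv.Perm (Fin n)) : ℕ :=
  (univ.filter (fun p : Fin n × Fin n × Fin n =>
    p.1 < p.2.1 ∧ p.2.1 < p.2.2 ∧ π p.2.1 < π p.1 ∧ π p.1 < π p.2.2)).card

/-- occurrences of pattern 312: triples `i < j < l` with `π j < π l < π i`. -/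
def a312 {n : ℕ} (π : Equiv.Perm (Fin n)) : ℕ :=
  (univ.filter (fun p : Fin n × Fin n × Fin n =>
    p.1 < p.2.1 ∧ p.2.1 < p.2.2 ∧ π p.2.1 < π p.2.2 ∧ π p.2.2 < π p.1)).card

/-- occurrences of pattern 4321: quadruples `i < j < l < m` with
`π m < π l < π j < π i`. -/
def a4321 {n : ℕ} (π : Equiv.Perm (Fin n)) : ℕ :=
  (univ.filter (fun p : Fin n × Fin n × Fin n × Fin n =>
    p.1 < p.2.1 ∧ p.2.1 < p.2.2.1 ∧ p.2.2.1 < p.2.2.2 ∧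
    π p.2.2.2 < π p.2.2.1 ∧ π p.2.2.1 < π p.2.1 ∧ π p.2.1 < π p.1)).card

set_option maxHeartbeats 1000000

section OrderLemmas
variable {α : Type*} [LinearOrder α]


-- G1: the number of elements of s below the t-th element of s is t.
lemma G1 (s : Finset α) {m : ℕ} (h : s.card = m) (t : Fin m) :
    (s.filter (· < s.orderEmbOfFin h t)).card = t := by
  have : s.filter (· < s.orderEmbOfFin h t) = (Finset.Iio t).image (s.orderEmbOfFin h) := by
    ext x
    simp only [mem_filter, mem_image, mem_Iio]
    constructor
    · rintro ⟨hxs, hxt⟩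
      have : x ∈ Set.range (s.orderEmbOfFin h) := by
        rw [Finset.range_orderEmbOfFin s h]; exact hxs
      obtain ⟨u, rfl⟩ := this
      exact ⟨u, (s.orderEmbOfFin h).strictMono.lt_iff_lt.1 hxt, rfl⟩
    · rintro ⟨u, hu, rfl⟩
      exact ⟨Finset.orderEmbOfFin_mem s h u, (s.orderEmbOfFin h).strictMono hu⟩
  rw [this, Finset.card_image_of_injective _ (s.orderEmbOfFin h).injective, Fin.card_Iio]

-- G2: if at least t+1 elements of s exceed x, then the (t+1)-th largest element exceeds x.
lemma G2 (s : Finset α) {m : ℕ} (h : s.card = m) (x : α) (t : ℕ) (ht : t < m)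
    (hc : t + 1 ≤ (s.filter (x < ·)).card) :
    x < s.orderEmbOfFin h ⟨m - 1 - t, by omega⟩ := by
  by_contra hle
  push_neg at hle
  have hsub : s.filter (x < ·) ⊆ (Finset.Ioi (⟨m - 1 - t, by omega⟩ : Fin m)).image (s.orderEmbOfFin h) := by
    intro y hy
    obtain ⟨hys, hxy⟩ := mem_filter.1 hy
    have : y ∈ Set.range (s.orderEmbOfFin h) := by
      rw [Finset.range_orderEmbOfFin s h]; exact hys
    obtain ⟨u, rfl⟩ := this
    refine mem_image.2 ⟨u, mem_Ioi.2 ?_, rfl⟩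
    by_contra hut
    push_neg at hut
    exact absurd (lt_of_lt_of_le hxy ((s.orderEmbOfFin h).monotone hut)) (not_lt.2 hle)
  have := (Finset.card_le_card hsub).trans
    (Finset.card_image_le.trans (le_of_eq (Fin.card_Ioi _)))
  simp only [Fin.val_mk] at this
  omega

-- G3: a strictly decreasing map with range s is determined by s.
lemma G3 (s : Finset α) {m : ℕ} (h : s.card = m) (g : Fin m → α) (hg : StrictAnti g)
    (hs : Set.range g = ↑s) (t : Fin m) :
    g t = s.orderEmbOfFin h ⟨m - 1 - t, by omega⟩ := by
  have hm : 0 < m := t.pos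
  set g' : Fin m → α := fun u => g ⟨m - 1 - u, by omega⟩ with hg'
  have hmono : StrictMono g' := by
    intro a b hab
    exact hg (by simp only [Fin.mk_lt_mk]; omega)
  have hrange : Set.range g' = ↑s := by
    rw [← hs]
    apply Set.Subset.antisymm
    · rintro _ ⟨u, rfl⟩; exact ⟨_, rfl⟩
    · rintro _ ⟨u, rfl⟩
      exact ⟨⟨m - 1 - u, by omega⟩, by simp only [hg']; congr 1; ext; simp; omega⟩
  have := Finset.orderEmbOfFin_unique h (fun x => by rw [← Finset.mem_coe, ← hrange]; exact ⟨x, rfl⟩) hmono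
  have h2 : g' ⟨m - 1 - t, by omega⟩ = s.orderEmbOfFin h ⟨m - 1 - t, by omega⟩ := by rw [this]
  rw [← h2, hg']
  congr 1
  ext
  simp
  omega

end OrderLemmas

section RMin
variable {n : ℕ}


def rmin (π : Equiv.Perm (Fin n)) (i : Fin n) : ℕ :=
  ((Finset.Iic i).image (fun j => (π j : ℕ))).min'
    (Finset.Nonempty.image ⟨i, Finset.mem_Iic.2 le_rfl⟩ _)

lemma rmin_le (π : Equiv.Perm (Fin n)) {i j : Fin n} (h : j ≤ i) : rmin π i ≤ (π j : ℕ) :=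
  Finset.min'_le _ _ (Finset.mem_image_of_mem _ (Finset.mem_Iic.2 h))

lemma exists_rmin (π : Equiv.Perm (Fin n)) (i : Fin n) : ∃ j, j ≤ i ∧ (π j : ℕ) = rmin π i := by
  obtain ⟨x, hx, hx'⟩ := Finset.mem_image.1 (Finset.min'_mem _
    (Finset.Nonempty.image ⟨i, Finset.mem_Iic.2 le_rfl⟩ (fun j => (π j : ℕ))))
  exact ⟨x, Finset.mem_Iic.1 hx, hx'⟩

lemma rmin_anti (π : Equiv.Perm (Fin n)) {i j : Fin n} (h : i ≤ j) : rmin π j ≤ rmin π i := by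
  obtain ⟨p, hp, hp'⟩ := exists_rmin π i
  exact hp' ▸ rmin_le π (le_trans hp h)

lemma rmin_add_le (π : Equiv.Perm (Fin n)) (i : Fin n) : rmin π i + i + 1 ≤ n := by
  have hmn : rmin π i < n := lt_of_le_of_lt (rmin_le π le_rfl) (π i).isLt
  have hsub : (Finset.Iic i).image π ⊆ Finset.Ici (⟨rmin π i, hmn⟩ : Fin n) := by
    intro x hx
    obtain ⟨j, hj, rfl⟩ := Finset.mem_image.1 hx
    exact Finset.mem_Ici.2 (rmin_le π (Finset.mem_Iic.1 hj))
  have hcard := Finset.card_le_card hsub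
  rw [Finset.card_image_of_injective _ (Equiv.injective π), Fin.card_Iic, Fin.card_Ici] at hcard
  simp only [Fin.val_mk] at hcard
  omega


/-- positions of strict new minima of `f`. -/
def minP (f : Fin n → ℕ) : Finset (Fin n) := univ.filter (fun i => ∀ j, j < i → f i < f j)

lemma mem_minP {f : Fin n → ℕ} {i : Fin n} : i ∈ minP f ↔ ∀ j, j < i → f i < f j := by
  simp [minP]

lemma minP_strictAnti {f : Fin n → ℕ} {i j : Fin n} (hj : j ∈ minP f) (hij : i < j) :
    f j < f i := (mem_minP.1 hj) i hij

lemma minP_injOn {f : Fin n → ℕ} : Set.InjOn f (minP f) := by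
  intro a ha b hb hab
  by_contra hne
  rcases lt_or_gt_of_ne hne with h | h
  · exact absurd hab (ne_of_gt (minP_strictAnti hb h))
  · exact absurd hab (ne_of_lt (minP_strictAnti ha h))

lemma exists_fo {f : Fin n → ℕ} (hA : ∀ i j : Fin n, i ≤ j → f j ≤ f i) (i : Fin n) :
    ∃ p, p ≤ i ∧ p ∈ minP f ∧ f p = f i := by
  have hne : (univ.filter (fun j : Fin n => f j ≤ f i)).Nonempty :=
    ⟨i, by simp⟩
  set p := (univ.filter (fun j : Fin n => f j ≤ f i)).min' hne with hp
  have hpmem := Finset.min'_mem _ hne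
  have hpi : f p ≤ f i := (Finset.mem_filter.1 hpmem).2
  have hple : p ≤ i := Finset.min'_le _ _ (by simp)
  have hfe : f p = f i := le_antisymm hpi (hA p i hple)
  refine ⟨p, hple, mem_minP.2 fun q hq => ?_, hfe⟩
  by_contra hle
  push_neg at hle
  have : q ∈ univ.filter (fun j : Fin n => f j ≤ f i) := by
    simp only [mem_filter, mem_univ, true_and]
    exact le_trans hle hpi
  exact absurd (Finset.min'_le _ _ this) (not_le.2 hq)

/-- the set of minimum values. -/
def VV (f : Fin n → ℕ) : Finset ℕ := (minP f).image f
/-- the complement values. -/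
def WW (f : Fin n → ℕ) : Finset ℕ := (Finset.range n) \ VV f
/-- the rank of a non-minimum position among non-minimum positions. -/
def rnk (f : Fin n → ℕ) (i : Fin n) : ℕ := (((minP f)ᶜ).filter (· < i)).card

lemma VV_subset_range {f : Fin n → ℕ} (hB : ∀ i : Fin n, f i + i + 1 ≤ n) :
    VV f ⊆ Finset.range n := by
  intro v hv
  obtain ⟨p, _, rfl⟩ := Finset.mem_image.1 hv
  have := hB p
  simp only [Finset.mem_range]
  omega

lemma card_VV {f : Fin n → ℕ} : (VV f).card = (minP f).card :=
  Finset.card_image_of_injOn minP_injOn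

lemma card_WW {f : Fin n → ℕ} (hB : ∀ i : Fin n, f i + i + 1 ≤ n) :
    (WW f).card = ((minP f)ᶜ).card := by
  rw [WW, Finset.card_sdiff_of_subset (VV_subset_range hB), Finset.card_range, card_VV,
    Finset.card_compl, Fintype.card_fin]

lemma rnk_lt {f : Fin n → ℕ} {i : Fin n} (hi : i ∉ minP f) : rnk f i < ((minP f)ᶜ).card := by
  apply Finset.card_lt_card
  refine ⟨Finset.filter_subset _ _, fun hsub => ?_⟩
  have : i ∈ ((minP f)ᶜ).filter (· < i) := hsub (Finset.mem_compl.2 hi)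
  simp at this

/-- key counting: at a non-minimum position `i` of rank `t`, more than `t`
complement values exceed `f i`. -/
lemma F2 {f : Fin n → ℕ} (hA : ∀ i j : Fin n, i ≤ j → f j ≤ f i)
    (hB : ∀ i : Fin n, f i + i + 1 ≤ n) {i : Fin n} (hi : i ∉ minP f) :
    rnk f i + 1 ≤ ((WW f).filter (f i < ·)).card := by
  -- split Iio i into min and rest positions
  have h1 : (((Finset.Iio i)).filter (· ∈ minP f)).card
      + ((Finset.Iio i).filter (fun x => ¬ x ∈ minP f)).card = i.val := by
    rw [Finset.card_filter_add_card_filter_not, Fin.card_Iio]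
  have h2 : rnk f i = ((Finset.Iio i).filter (fun x => ¬ x ∈ minP f)).card := by
    unfold rnk
    congr 1
    ext x
    simp only [Finset.mem_filter, Finset.mem_compl, Finset.mem_Iio]
    tauto
  -- first occurrence of the value f i
  obtain ⟨p₀, hp₀i, hp₀m, hp₀f⟩ := exists_fo hA i
  have hp₀lt : p₀ < i := lt_of_le_of_ne hp₀i (fun h => hi (h ▸ hp₀m))
  -- values of V above f i
  have hVim : (VV f).filter (f i < ·) = ((minP f).filter (fun p => f i < f p)).image f := by
    ext v
    simp only [VV, Finset.mem_filter, Finset.mem_image]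
    constructor
    · rintro ⟨⟨p, hp, rfl⟩, hv⟩; exact ⟨p, ⟨hp, hv⟩, rfl⟩
    · rintro ⟨p, ⟨hp, hv⟩, rfl⟩; exact ⟨⟨p, hp, rfl⟩, hv⟩
  have hVcard : ((VV f).filter (f i < ·)).card = ((minP f).filter (fun p => f i < f p)).card := by
    rw [hVim]
    exact Finset.card_image_of_injOn (minP_injOn.mono (by
      intro x hx; exact (Finset.mem_filter.1 hx).1))
  have hsub : (minP f).filter (fun p => f i < f p)
      ⊆ (((Finset.Iio i)).filter (· ∈ minP f)).erase p₀ := by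
    intro p hp
    obtain ⟨hpm, hpv⟩ := Finset.mem_filter.1 hp
    have hpi : p < i := by
      by_contra hle
      push_neg at hle
      exact absurd (hA i p hle) (not_le.2 hpv)
    refine Finset.mem_erase.2 ⟨fun h => ?_, Finset.mem_filter.2 ⟨Finset.mem_Iio.2 hpi, hpm⟩⟩
    rw [h, hp₀f] at hpv; omega
  have hp₀A : p₀ ∈ ((Finset.Iio i)).filter (· ∈ minP f) :=
    Finset.mem_filter.2 ⟨Finset.mem_Iio.2 hp₀lt, hp₀m⟩
  have hAcard : ((minP f).filter (fun p => f i < f p)).card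
      ≤ (((Finset.Iio i)).filter (· ∈ minP f)).card - 1 := by
    calc _ ≤ ((((Finset.Iio i)).filter (· ∈ minP f)).erase p₀).card := Finset.card_le_card hsub
    _ = _ := Finset.card_erase_of_mem hp₀A
  have hp₀Acard : 1 ≤ (((Finset.Iio i)).filter (· ∈ minP f)).card :=
    Finset.card_pos.2 ⟨p₀, hp₀A⟩
  -- W values above f i
  have hWf : (WW f).filter (f i < ·)
      = ((Finset.range n).filter (f i < ·)) \ ((VV f).filter (f i < ·)) := by
    ext x
    simp only [WW, Finset.mem_filter, Finset.mem_sdiff]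
    tauto
  have hVsub : (VV f).filter (f i < ·) ⊆ (Finset.range n).filter (f i < ·) :=
    Finset.filter_subset_filter _ (VV_subset_range hB)
  have hWcard : ((WW f).filter (f i < ·)).card
      = ((Finset.range n).filter (f i < ·)).card - ((VV f).filter (f i < ·)).card := by
    rw [hWf, Finset.card_sdiff_of_subset hVsub]
  have hrange : ((Finset.range n).filter (f i < ·)).card = n - (f i + 1) := by
    have : (Finset.range n).filter (f i < ·) = Finset.Ico (f i + 1) n := by
      ext x; simp only [Finset.mem_filter, Finset.mem_range, Finset.mem_Ico]; omega
    rw [this, Nat.card_Ico]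
  have hBi := hB i
  omega


lemma rnk_lt_rnk {f : Fin n → ℕ} {a b : Fin n} (ha : a ∉ minP f) (hab : a < b) :
    rnk f a < rnk f b := by
  apply Finset.card_lt_card
  have hsub : ((minP f)ᶜ).filter (· < a) ⊆ ((minP f)ᶜ).filter (· < b) :=
    Finset.monotone_filter_right _ (fun x _ hx => lt_trans hx hab)
  refine (Finset.ssubset_iff_of_subset hsub).2 ⟨a, ?_, ?_⟩
  · exact Finset.mem_filter.2 ⟨Finset.mem_compl.2 ha, hab⟩
  · simp

/-- Existence: every staircase function is the running minimum of a
123-avoiding permutation. -/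
lemma E1' {f : Fin n → ℕ} (hA : ∀ i j : Fin n, i ≤ j → f j ≤ f i)
    (hB : ∀ i : Fin n, f i + i + 1 ≤ n) :
    ∃ π : Equiv.Perm (Fin n), avoids123 π ∧ ∀ i, rmin π i = f i := by
  classical
  set m := ((minP f)ᶜ).card with hm
  have hW : (WW f).card = m := card_WW hB
  have hWlt : ∀ t : Fin m, (WW f).orderEmbOfFin hW t < n := fun t => by
    have h1 := Finset.orderEmbOfFin_mem (WW f) hW t
    have h2 := (Finset.mem_sdiff.1 h1).1
    exact Finset.mem_range.1 h2
  have hWmem : ∀ t : Fin m, (WW f).orderEmbOfFin hW t ∈ WW f := fun t =>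
    Finset.orderEmbOfFin_mem (WW f) hW t
  -- the underlying function of the permutation
  set g : Fin n → Fin n := fun i =>
    if h : i ∈ minP f then ⟨f i, by have := hB i; omega⟩
    else ⟨(WW f).orderEmbOfFin hW ⟨m - 1 - rnk f i, by have := rnk_lt h; omega⟩,
      hWlt _⟩ with hg
  have hgmin : ∀ i ∈ minP f, (g i : ℕ) = f i := fun i hi => by simp [hg, hi]
  have hgrest : ∀ i (h : i ∉ minP f),
      (g i : ℕ) = (WW f).orderEmbOfFin hW ⟨m - 1 - rnk f i, by have := rnk_lt h; omega⟩ :=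
    fun i h => by simp [hg, h]
  have hgrestW : ∀ i, i ∉ minP f → (g i : ℕ) ∈ WW f := fun i h => by
    rw [hgrest i h]; exact hWmem _
  have hgrest_gt : ∀ i, i ∉ minP f → f i < (g i : ℕ) := fun i h => by
    rw [hgrest i h]
    exact G2 (WW f) hW (f i) (rnk f i) (rnk_lt h) (F2 hA hB h)
  have hge : ∀ i, f i ≤ (g i : ℕ) := fun i => by
    by_cases h : i ∈ minP f
    · rw [hgmin i h]
    · exact le_of_lt (hgrest_gt i h)
  -- injectivity
  have hginj : Function.Injective g := by
    intro a b hab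
    have habv : (g a : ℕ) = (g b : ℕ) := congrArg Fin.val hab
    by_cases ha : a ∈ minP f <;> by_cases hb : b ∈ minP f
    · exact minP_injOn ha hb (by rw [← hgmin a ha, ← hgmin b hb, habv])
    · exfalso
      have h1 : (g a : ℕ) ∈ VV f := by
        rw [hgmin a ha]; exact Finset.mem_image_of_mem f ha
      have h2 := (Finset.mem_sdiff.1 (hgrestW b hb)).2
      rw [habv] at h1; exact h2 h1
    · exfalso
      have h1 : (g b : ℕ) ∈ VV f := by
        rw [hgmin b hb]; exact Finset.mem_image_of_mem f hb
      have h2 := (Finset.mem_sdiff.1 (hgrestW a ha)).2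
      rw [← habv] at h1; exact h2 h1
    · rw [hgrest a ha, hgrest b hb] at habv
      have hidx := ((WW f).orderEmbOfFin hW).injective habv
      have hidx' : m - 1 - rnk f a = m - 1 - rnk f b := congrArg Fin.val hidx
      have hb1 := rnk_lt ha
      have hb2 := rnk_lt hb
      have hre : rnk f a = rnk f b := by omega
      by_contra hne
      rcases lt_or_gt_of_ne hne with h | h
      · exact absurd hre (ne_of_lt (rnk_lt_rnk ha h))
      · exact absurd hre.symm (ne_of_lt (rnk_lt_rnk hb h))
  have hgbij : Function.Bijective g := Finite.injective_iff_bijective.1 hginj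
  set π : Equiv.Perm (Fin n) := Equiv.ofBijective g hgbij with hpi
  have hpig : ∀ i, π i = g i := fun i => rfl
  have hrm : ∀ i, rmin π i = f i := by
    intro i
    apply le_antisymm
    · obtain ⟨p, hpi2, hpm, hpf⟩ := exists_fo hA i
      calc rmin π i ≤ (π p : ℕ) := rmin_le π hpi2
      _ = f i := by rw [hpig, hgmin p hpm, hpf]
    · unfold rmin
      apply Finset.le_min'
      intro y hy
      obtain ⟨j, hj, rfl⟩ := Finset.mem_image.1 hy
      calc f i ≤ f j := hA j i (Finset.mem_Iic.1 hj)
      _ ≤ (π j : ℕ) := hge j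
  refine ⟨π, ?_, hrm⟩
  rintro i j l hij hjl ⟨h1, h2⟩
  have h1' : (π i : ℕ) < (π j : ℕ) := Fin.lt_def.1 h1
  have h2' : (π j : ℕ) < (π l : ℕ) := Fin.lt_def.1 h2
  rw [hpig, hpig] at h1' h2'
  by_cases hl : l ∈ minP f
  · have he : (g l : ℕ) = f l := hgmin l hl
    have h3 : f l ≤ f j := hA j l (le_of_lt hjl)
    have h4 : f j ≤ (g j : ℕ) := hge j
    omega
  · by_cases hjm : j ∈ minP f
    · have he : (g j : ℕ) = f j := hgmin j hjm
      have h3 : f j ≤ f i := hA i j (le_of_lt hij)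
      have h4 : f i ≤ (g i : ℕ) := hge i
      omega
    · have hr := rnk_lt_rnk hjm hjl
      have hbj := rnk_lt hjm
      have hbl := rnk_lt hl
      have hπj := hgrest j hjm
      have hπl := hgrest l hl
      have hlt : (g l : ℕ) < (g j : ℕ) := by
        rw [hπj, hπl]
        exact ((WW f).orderEmbOfFin hW).strictMono (by simp only [Fin.mk_lt_mk]; omega)
      omega


/-- positions in `minP (rmin π)` are exactly the left-to-right minima of `π`. -/
lemma mem_minP_rmin_iff (π : Equiv.Perm (Fin n)) (i : Fin n) :
    i ∈ minP (fun j => rmin π j) ↔ (π i : ℕ) = rmin π i := by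
  constructor
  · intro hi
    by_contra hne
    have hlt : rmin π i < (π i : ℕ) := lt_of_le_of_ne (rmin_le π le_rfl) (Ne.symm hne)
    obtain ⟨q, hq, hqe⟩ := exists_rmin π i
    have hqne : q ≠ i := fun h => by rw [h] at hqe; omega
    have hqlt : q < i := lt_of_le_of_ne hq hqne
    have h1 := (mem_minP.1 hi) q hqlt
    have h2 : rmin π q ≤ (π q : ℕ) := rmin_le π le_rfl
    omega
  · intro he
    refine mem_minP.2 fun j hj => ?_
    have h1 : rmin π i ≤ rmin π j := rmin_anti π (le_of_lt hj)
    rcases lt_or_eq_of_le h1 with h | h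
    · exact h
    · exfalso
      obtain ⟨q, hq, hqe⟩ := exists_rmin π j
      have hqi : q = i := π.injective (Fin.ext (by omega))
      rw [hqi] at hq
      exact absurd (lt_of_le_of_lt hq hj) (lt_irrefl i)

/-- a 123-avoiding permutation is strictly decreasing on non-minimum positions. -/
lemma rest_anti {π : Equiv.Perm (Fin n)} (hπ : avoids123 π) {a b : Fin n}
    (ha : a ∉ minP (fun j => rmin π j)) (hab : a < b) (hb : b ∉ minP (fun j => rmin π j)) :
    (π b : ℕ) < (π a : ℕ) := by
  have hane : (π a : ℕ) ≠ rmin π a := fun h => ha ((mem_minP_rmin_iff π a).2 h)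
  have halt : rmin π a < (π a : ℕ) := lt_of_le_of_ne (rmin_le π le_rfl) (Ne.symm hane)
  obtain ⟨q, hq, hqe⟩ := exists_rmin π a
  have hqne : q ≠ a := fun h => by rw [h] at hqe; omega
  have hqlt : q < a := lt_of_le_of_ne hq hqne
  by_contra hle
  push_neg at hle
  have hne : (π a : ℕ) ≠ (π b : ℕ) := fun h => (ne_of_lt hab) (π.injective (Fin.ext h))
  have hlt : (π a : ℕ) < (π b : ℕ) := lt_of_le_of_ne hle hne
  exact hπ q a b hqlt hab ⟨Fin.lt_def.2 (by omega), Fin.lt_def.2 hlt⟩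

/-- the non-minimum values of any permutation are exactly the complement values. -/
lemma rest_image (π : Equiv.Perm (Fin n)) :
    ((minP (fun j => rmin π j))ᶜ).image (fun a => (π a : ℕ)) = WW (fun j => rmin π j) := by
  apply Finset.eq_of_subset_of_card_le
  · intro x hx
    obtain ⟨a, ha, rfl⟩ := Finset.mem_image.1 hx
    have haR := Finset.mem_compl.1 ha
    refine Finset.mem_sdiff.2 ⟨Finset.mem_range.2 (π a).isLt, fun hV => ?_⟩
    obtain ⟨p, hp, hpe⟩ := Finset.mem_image.1 hV
    have hpv : (π p : ℕ) = rmin π p := (mem_minP_rmin_iff π p).1 hp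
    have hpa : p = a := π.injective (Fin.ext (by rw [hpv, hpe]))
    rw [hpa] at hp
    exact haR hp
  · rw [card_WW (fun i => rmin_add_le π i),
      Finset.card_image_of_injective _ (fun x y hxy => π.injective (Fin.ext hxy))]

/-- formula for the value of a 123-avoiding permutation at a non-minimum position. -/
lemma rest_formula {π : Equiv.Perm (Fin n)} (hπ : avoids123 π) {i : Fin n}
    (hi : i ∉ minP (fun j => rmin π j)) :
    (π i : ℕ) = (WW (fun j => rmin π j)).orderEmbOfFin (card_WW (fun j => rmin_add_le π j))
      ⟨((minP (fun j => rmin π j))ᶜ).card - 1 - rnk (fun j => rmin π j) i,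
        by have := rnk_lt hi; omega⟩ := by
  set f := fun j => rmin π j with hf
  set R := (minP f)ᶜ with hR
  set m := R.card with hm
  set e := R.orderEmbOfFin (rfl : R.card = m) with he
  have hiR : i ∈ R := Finset.mem_compl.2 hi
  have hirange : i ∈ Set.range e := by rw [he, Finset.range_orderEmbOfFin]; exact hiR
  obtain ⟨t₀, ht₀⟩ := hirange
  have hrnk : rnk f i = (t₀ : ℕ) := by
    have hh := G1 R (rfl : R.card = m) t₀
    rw [← he, ht₀] at hh
    exact hh
  set g : Fin m → ℕ := fun t => (π (e t) : ℕ) with hg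
  have hganti : StrictAnti g := by
    intro s t hst
    exact rest_anti hπ
      (Finset.mem_compl.1 (by rw [he] at *; exact Finset.orderEmbOfFin_mem R (rfl : R.card = m) s))
      (e.strictMono hst)
      (Finset.mem_compl.1 (by rw [he] at *; exact Finset.orderEmbOfFin_mem R (rfl : R.card = m) t))
  have hgrange : Set.range g = ↑(WW f) := by
    rw [← rest_image π]
    ext x
    simp only [Set.mem_range, Finset.coe_image, Set.mem_image, Finset.mem_coe]
    constructor
    · rintro ⟨t, rfl⟩
      exact ⟨e t, by rw [he]; exact Finset.orderEmbOfFin_mem R (rfl : R.card = m) t, rfl⟩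
    · rintro ⟨a, ha, rfl⟩
      have : a ∈ Set.range e := by rw [he, Finset.range_orderEmbOfFin]; exact ha
      obtain ⟨t, rfl⟩ := this
      exact ⟨t, rfl⟩
  have hWm : (WW f).card = m := card_WW (fun j => rmin_add_le π j)
  have hkey := G3 (WW f) hWm g hganti hgrange t₀
  rw [hg] at hkey
  simp only at hkey
  rw [ht₀] at hkey
  rw [hkey]
  congr 1
  apply Fin.ext
  simp only [Fin.val_mk]
  have hmm : ((minP (fun j => rmin π j))ᶜ).card = m := rfl
  have hrr : rnk (fun j => rmin π j) i = rnk f i := rfl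
  have ht := t₀.isLt
  omega

lemma embcongr (f₁ f₂ : Fin n → ℕ) (hf : f₁ = f₂)
    (h₁ : (WW f₁).card = ((minP f₁)ᶜ).card) (h₂ : (WW f₂).card = ((minP f₂)ᶜ).card)
    (a₁ a₂ : ℕ) (ha : a₁ = a₂) (p₁ : a₁ < ((minP f₁)ᶜ).card) (p₂ : a₂ < ((minP f₂)ᶜ).card) :
    ((WW f₁).orderEmbOfFin h₁ ⟨a₁, p₁⟩ : ℕ) = (WW f₂).orderEmbOfFin h₂ ⟨a₂, p₂⟩ := by
  subst hf; subst ha; rfl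

/-- Uniqueness: a 123-avoiding permutation is determined by its running minimum. -/
lemma L1 {π τ : Equiv.Perm (Fin n)} (hπ : avoids123 π) (hτ : avoids123 τ)
    (h : ∀ i, rmin π i = rmin τ i) : π = τ := by
  have hf : (fun j => rmin τ j) = (fun j => rmin π j) := funext (fun j => (h j).symm)
  apply Equiv.ext
  intro i
  apply Fin.ext
  by_cases hi : i ∈ minP (fun j => rmin π j)
  · have h1 := (mem_minP_rmin_iff π i).1 hi
    have h2 := (mem_minP_rmin_iff τ i).1 (by rw [hf]; exact hi)
    rw [h1, h2, h i]
  · have h1 := rest_formula hπ hi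
    have h2 := rest_formula hτ (by rw [hf]; exact hi)
    rw [h1, h2]
    refine embcongr _ _ hf.symm _ _ _ _ ?_ _ _
    rw [hf]

end RMin


/-- staircase functions: antitone with `f i + i + 1 ≤ n`. -/
def Stair (n : ℕ) : Finset (Fin n → Fin (n + 1)) :=
  univ.filter (fun F => (∀ i j : Fin n, i ≤ j → F j ≤ F i) ∧ ∀ i : Fin n, (F i : ℕ) + i + 1 ≤ n)

lemma mem_Stair {n : ℕ} {F : Fin n → Fin (n + 1)} :
    F ∈ Stair n ↔ (∀ i j : Fin n, i ≤ j → F j ≤ F i) ∧ ∀ i : Fin n, (F i : ℕ) + i + 1 ≤ n := by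
  simp [Stair]

lemma stair_zero : (Stair 0).card = 1 := by
  have h : Stair 0 = univ := by
    ext F
    simp only [mem_Stair, Finset.mem_univ, iff_true]
    exact ⟨fun i => i.elim0, fun i => i.elim0⟩
  rw [h, Finset.card_univ]
  simp

/-- first touching point of the staircase with the diagonal. -/
def tch {n : ℕ} (F : Fin (n + 1) → Fin (n + 2)) : ℕ :=
  if h : (univ.filter (fun i : Fin (n + 1) => (F i : ℕ) + i + 1 = n + 1)).Nonempty
  then (((univ.filter (fun i : Fin (n + 1) => (F i : ℕ) + i + 1 = n + 1)).min' h : Fin (n + 1)) : ℕ)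
  else 0

lemma tch_le {n : ℕ} (F : Fin (n + 1) → Fin (n + 2)) : tch F ≤ n := by
  rw [tch]
  split
  · next h =>
    have := ((univ.filter (fun i : Fin (n + 1) => (F i : ℕ) + i + 1 = n + 1)).min' h).isLt
    omega
  · omega

lemma tch_spec {n : ℕ} {F : Fin (n + 1) → Fin (n + 2)} (hF : F ∈ Stair (n + 1)) :
    (F ⟨tch F, Nat.lt_succ_of_le (tch_le F)⟩ : ℕ) + tch F + 1 = n + 1 ∧
      ∀ j : Fin (n + 1), (j : ℕ) < tch F → (F j : ℕ) + j + 1 ≤ n := by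
  obtain ⟨hanti, hbound⟩ := mem_Stair.1 hF
  have hlast : (F (Fin.last n) : ℕ) + (Fin.last n : ℕ) + 1 = n + 1 := by
    have hb := hbound (Fin.last n)
    have hv : (Fin.last n : ℕ) = n := rfl
    omega
  have hne : (univ.filter (fun i : Fin (n + 1) => (F i : ℕ) + i + 1 = n + 1)).Nonempty :=
    ⟨Fin.last n, by simp only [Finset.mem_filter, Finset.mem_univ, true_and]; exact hlast⟩
  have htch : tch F =
      (((univ.filter (fun i : Fin (n + 1) => (F i : ℕ) + i + 1 = n + 1)).min' hne : Fin (n + 1)) : ℕ) := by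
    rw [tch, dif_pos hne]
  have hmem := Finset.min'_mem _ hne
  simp only [Finset.mem_filter, Finset.mem_univ, true_and] at hmem
  constructor
  · have heq : (⟨tch F, Nat.lt_succ_of_le (tch_le F)⟩ : Fin (n + 1)) =
        (univ.filter (fun i : Fin (n + 1) => (F i : ℕ) + i + 1 = n + 1)).min' hne :=
      Fin.ext (by simp only [Fin.val_mk]; exact htch)
    rw [heq, htch]
    exact hmem
  · intro j hj
    have hjn : j ∉ univ.filter (fun i : Fin (n + 1) => (F i : ℕ) + i + 1 = n + 1) := by
      intro hmem2
      have h1 := Fin.le_def.1 (Finset.min'_le _ _ hmem2)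
      omega
    simp only [Finset.mem_filter, Finset.mem_univ, true_and] at hjn
    have := hbound j
    omega

lemma tch_eq {n : ℕ} (F : Fin (n + 1) → Fin (n + 2)) (k : ℕ) (hk : k ≤ n)
    (ht : (F ⟨k, by omega⟩ : ℕ) + k + 1 = n + 1)
    (hb : ∀ j : Fin (n + 1), (j : ℕ) < k → (F j : ℕ) + j + 1 ≠ n + 1) : tch F = k := by
  have hmem : (⟨k, by omega⟩ : Fin (n + 1)) ∈
      univ.filter (fun i : Fin (n + 1) => (F i : ℕ) + i + 1 = n + 1) := by
    simp only [Finset.mem_filter, Finset.mem_univ, true_and]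
    exact ht
  have hne : (univ.filter (fun i : Fin (n + 1) => (F i : ℕ) + i + 1 = n + 1)).Nonempty := ⟨_, hmem⟩
  rw [tch, dif_pos hne]
  have h1 := Fin.le_def.1 (Finset.min'_le _ _ hmem)
  simp only [Fin.val_mk] at h1
  have hmm := Finset.min'_mem _ hne
  simp only [Finset.mem_filter, Finset.mem_univ, true_and] at hmm
  have h2 : ¬ (((univ.filter (fun i : Fin (n + 1) => (F i : ℕ) + i + 1 = n + 1)).min' hne : Fin (n + 1)) : ℕ) < k :=
    fun h => hb _ h hmm
  omega

/-- split a staircase touching first at `k` into two smaller staircases. -/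
def stairFwd (n k : ℕ) (hkn : k ≤ n) (F : Fin (n + 1) → Fin (n + 2)) :
    (Fin k → Fin (k + 1)) × (Fin (n - k) → Fin (n - k + 1)) :=
  (fun i => ⟨min ((F ⟨i, by omega⟩ : ℕ) - (n - k)) k, by omega⟩,
   fun j => ⟨min (F ⟨k + 1 + j, by omega⟩ : ℕ) (n - k), by omega⟩)

/-- glue two staircases into a staircase touching first at `k`. -/
def stairBwd (n k : ℕ) (hkn : k ≤ n)
    (p : (Fin k → Fin (k + 1)) × (Fin (n - k) → Fin (n - k + 1))) :
    Fin (n + 1) → Fin (n + 2) := fun i =>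
  if h1 : (i : ℕ) < k then ⟨(p.1 ⟨i, h1⟩ : ℕ) + (n - k), by have := (p.1 ⟨i, h1⟩).isLt; omega⟩
  else if h2 : (i : ℕ) = k then ⟨n - k, by omega⟩
  else ⟨(p.2 ⟨(i : ℕ) - k - 1, by omega⟩ : ℕ), by have := (p.2 ⟨(i : ℕ) - k - 1, by omega⟩).isLt; omega⟩

lemma stairBwd_lt {n k : ℕ} (hkn : k ≤ n) (p) {i : Fin (n + 1)} (h1 : (i : ℕ) < k) :
    (stairBwd n k hkn p i : ℕ) = (p.1 ⟨i, h1⟩ : ℕ) + (n - k) := by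
  simp only [stairBwd, dif_pos h1, Fin.val_mk]

lemma stairBwd_eq {n k : ℕ} (hkn : k ≤ n) (p) {i : Fin (n + 1)} (h2 : (i : ℕ) = k) :
    (stairBwd n k hkn p i : ℕ) = n - k := by
  simp only [stairBwd, dif_neg (by omega : ¬ (i : ℕ) < k), dif_pos h2, Fin.val_mk]

lemma stairBwd_gt {n k : ℕ} (hkn : k ≤ n) (p) {i : Fin (n + 1)} (h1 : ¬ (i : ℕ) < k)
    (h2 : ¬ (i : ℕ) = k) :
    (stairBwd n k hkn p i : ℕ) = (p.2 ⟨(i : ℕ) - k - 1, by omega⟩ : ℕ) := by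
  simp only [stairBwd, dif_neg h1, dif_neg h2, Fin.val_mk]

lemma stair_succ (n : ℕ) :
    (Stair (n + 1)).card = ∑ k ∈ Finset.range (n + 1), (Stair k).card * (Stair (n - k)).card := by
  rw [Finset.card_eq_sum_card_fiberwise (f := tch) (t := Finset.range (n + 1))
    (fun F hF => Finset.mem_range.2 (Nat.lt_succ_of_le (tch_le F)))]
  apply Finset.sum_congr rfl
  intro k hk
  have hkn : k ≤ n := by have := Finset.mem_range.1 hk; omega
  rw [← Finset.card_product]
  apply Finset.card_nbij' (stairFwd n k hkn) (stairBwd n k hkn)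
  -- forward maps into the product
  · intro F hF
    obtain ⟨hFs, htch⟩ := Finset.mem_filter.1 hF
    obtain ⟨hanti, hbound⟩ := mem_Stair.1 hFs
    obtain ⟨htouch, hbelow0⟩ := tch_spec hFs
    set kk : Fin (n + 1) := ⟨k, by omega⟩ with hkk
    have hky : (⟨tch F, Nat.lt_succ_of_le (tch_le F)⟩ : Fin (n + 1)) = kk :=
      Fin.ext (by simp only [hkk, Fin.val_mk]; exact htch)
    rw [hky, htch] at htouch
    have hbelow : ∀ j : Fin (n + 1), (j : ℕ) < k → (F j : ℕ) + j + 1 ≤ n :=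
      fun j hj => hbelow0 j (by omega)
    have hge : ∀ i : Fin (n + 1), (i : ℕ) < k → n - k ≤ (F i : ℕ) := by
      intro i hi
      have h1 := Fin.le_def.1 (hanti i kk (Fin.le_def.2 (by simp only [hkk, Fin.val_mk]; omega)))
      have hkv : (kk : ℕ) = k := rfl
      have hfkk : (F kk : ℕ) = n - k := by omega
      omega
    simp only [Finset.mem_coe, Finset.mem_product]
    constructor
    · rw [mem_Stair]
      refine ⟨fun i j hij => ?_, fun i => ?_⟩
      · rw [Fin.le_def]
        simp only [stairFwd, Fin.val_mk]
        have h2 := Fin.le_def.1 (hanti ⟨i, by omega⟩ ⟨j, by omega⟩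
          (Fin.le_def.2 (by simp only [Fin.val_mk]; exact Fin.le_def.1 hij)))
        omega
      · simp only [stairFwd, Fin.val_mk]
        have h1 := hbelow ⟨i, by omega⟩ (by simp only [Fin.val_mk]; omega)
        have h2 := hge ⟨i, by omega⟩ (by simp only [Fin.val_mk]; omega)
        simp only [Fin.val_mk] at h1 h2
        omega
    · rw [mem_Stair]
      refine ⟨fun i j hij => ?_, fun i => ?_⟩
      · rw [Fin.le_def]
        simp only [stairFwd, Fin.val_mk]
        have h2 := Fin.le_def.1 (hanti ⟨k + 1 + i, by omega⟩ ⟨k + 1 + j, by omega⟩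
          (Fin.le_def.2 (by simp only [Fin.val_mk]; have := Fin.le_def.1 hij; omega)))
        omega
      · simp only [stairFwd, Fin.val_mk]
        have h1 := hbound ⟨k + 1 + i, by omega⟩
        simp only [Fin.val_mk] at h1
        omega
  -- backward maps into the fiber
  · intro p hp
    obtain ⟨hg, hh⟩ := Finset.mem_product.1 hp
    obtain ⟨hganti, hgbound⟩ := mem_Stair.1 hg
    obtain ⟨hhanti, hhbound⟩ := mem_Stair.1 hh
    rw [Finset.mem_coe, Finset.mem_filter]
    constructor
    · rw [mem_Stair]
      refine ⟨fun i j hij => ?_, fun i => ?_⟩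
      · rw [Fin.le_def]
        have hij' := Fin.le_def.1 hij
        by_cases h1 : (i : ℕ) < k <;> by_cases h2 : (j : ℕ) < k
        · rw [stairBwd_lt hkn p h1, stairBwd_lt hkn p h2]
          have := Fin.le_def.1 (hganti ⟨i, h1⟩ ⟨j, h2⟩ (Fin.le_def.2 (by simp only [Fin.val_mk]; omega)))
          omega
        · rw [stairBwd_lt hkn p h1]
          by_cases h3 : (j : ℕ) = k
          · rw [stairBwd_eq hkn p h3]; omega
          · rw [stairBwd_gt hkn p h2 h3]
            have := hhbound ⟨(j : ℕ) - k - 1, by omega⟩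
            simp only [Fin.val_mk] at this
            omega
        · omega
        · by_cases h3 : (i : ℕ) = k
          · rw [stairBwd_eq hkn p h3]
            have h4 : ¬ (j : ℕ) < k := by omega
            by_cases h5 : (j : ℕ) = k
            · rw [stairBwd_eq hkn p h5]
            · rw [stairBwd_gt hkn p h4 h5]
              have := hhbound ⟨(j : ℕ) - k - 1, by omega⟩
              simp only [Fin.val_mk] at this
              omega
          · rw [stairBwd_gt hkn p h1 h3]
            have h4 : ¬ (j : ℕ) < k := by omega
            have h5 : ¬ (j : ℕ) = k := by omega
            rw [stairBwd_gt hkn p h4 h5]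
            have := Fin.le_def.1 (hhanti ⟨(i : ℕ) - k - 1, by omega⟩ ⟨(j : ℕ) - k - 1, by omega⟩
              (Fin.le_def.2 (by simp only [Fin.val_mk]; omega)))
            omega
      · by_cases h1 : (i : ℕ) < k
        · rw [stairBwd_lt hkn p h1]
          have := hgbound ⟨i, h1⟩
          simp only [Fin.val_mk] at this
          omega
        · by_cases h2 : (i : ℕ) = k
          · rw [stairBwd_eq hkn p h2]; omega
          · rw [stairBwd_gt hkn p h1 h2]
            have := hhbound ⟨(i : ℕ) - k - 1, by omega⟩
            simp only [Fin.val_mk] at this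
            omega
    · apply tch_eq _ _ hkn
      · rw [stairBwd_eq hkn p (by simp : ((⟨k, by omega⟩ : Fin (n + 1)) : ℕ) = k)]
        omega
      · intro j hj
        rw [stairBwd_lt hkn p hj]
        have := hgbound ⟨j, hj⟩
        simp only [Fin.val_mk] at this
        intro hcon
        omega
  -- left inverse
  · intro F hF
    obtain ⟨hFs, htch⟩ := Finset.mem_filter.1 hF
    obtain ⟨hanti, hbound⟩ := mem_Stair.1 hFs
    obtain ⟨htouch, hbelow0⟩ := tch_spec hFs
    set kk : Fin (n + 1) := ⟨k, by omega⟩ with hkk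
    have hky : (⟨tch F, Nat.lt_succ_of_le (tch_le F)⟩ : Fin (n + 1)) = kk :=
      Fin.ext (by simp only [hkk, Fin.val_mk]; exact htch)
    rw [hky, htch] at htouch
    have hbelow : ∀ j : Fin (n + 1), (j : ℕ) < k → (F j : ℕ) + j + 1 ≤ n :=
      fun j hj => hbelow0 j (by omega)
    have hge : ∀ i : Fin (n + 1), (i : ℕ) < k → n - k ≤ (F i : ℕ) := by
      intro i hi
      have h1 := Fin.le_def.1 (hanti i kk (Fin.le_def.2 (by simp only [hkk, Fin.val_mk]; omega)))
      have hkv : (kk : ℕ) = k := rfl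
      have hfkk : (F kk : ℕ) = n - k := by omega
      omega
    funext i
    apply Fin.ext
    by_cases h1 : (i : ℕ) < k
    · rw [stairBwd_lt hkn _ h1]
      simp only [stairFwd, Fin.val_mk]
      have h2 := hbelow ⟨i, by omega⟩ (by simp only [Fin.val_mk]; omega)
      have h3 := hge ⟨i, by omega⟩ (by simp only [Fin.val_mk]; omega)
      have h4 : (⟨(i : ℕ), by omega⟩ : Fin (n + 1)) = i := Fin.ext rfl
      rw [h4] at h2 h3 ⊢
      omega
    · by_cases h2 : (i : ℕ) = k
      · rw [stairBwd_eq hkn _ h2]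
        have h4 : kk = i := Fin.ext (by simp only [hkk, Fin.val_mk]; omega)
        rw [h4] at htouch
        omega
      · rw [stairBwd_gt hkn _ h1 h2]
        simp only [stairFwd, Fin.val_mk]
        have h5 : (⟨k + 1 + ((i : ℕ) - k - 1), by omega⟩ : Fin (n + 1)) = i := Fin.ext (by simp only [Fin.val_mk]; omega)
        rw [h5]
        have := hbound i
        omega
  -- right inverse
  · intro p hp
    obtain ⟨hg, hh⟩ := Finset.mem_product.1 hp
    obtain ⟨hganti, hgbound⟩ := mem_Stair.1 hg
    obtain ⟨hhanti, hhbound⟩ := mem_Stair.1 hh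
    have e1 : (stairFwd n k hkn (stairBwd n k hkn p)).1 = p.1 := by
      funext i
      apply Fin.ext
      simp only [stairFwd, Fin.val_mk]
      rw [stairBwd_lt hkn p (by simp only [Fin.val_mk]; omega : ((⟨(i : ℕ), by omega⟩ : Fin (n + 1)) : ℕ) < k)]
      have h2 := (p.1 ⟨((⟨(i : ℕ), by omega⟩ : Fin (n + 1)) : ℕ), by simp only [Fin.val_mk]; omega⟩).isLt
      have h3 : (⟨((⟨(i : ℕ), by omega⟩ : Fin (n + 1)) : ℕ), by simp only [Fin.val_mk]; omega⟩ : Fin k) = i := Fin.ext rfl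
      rw [h3]
      have := hgbound i
      omega
    have e2 : (stairFwd n k hkn (stairBwd n k hkn p)).2 = p.2 := by
      funext j
      apply Fin.ext
      simp only [stairFwd, Fin.val_mk]
      rw [stairBwd_gt hkn p (by simp only [Fin.val_mk]; omega) (by simp only [Fin.val_mk]; omega)]
      have h3 : (⟨((⟨k + 1 + (j : ℕ), by omega⟩ : Fin (n + 1)) : ℕ) - k - 1, by simp only [Fin.val_mk]; omega⟩ : Fin (n - k)) = j := Fin.ext (by simp only [Fin.val_mk]; omega)
      rw [h3]
      have := hhbound j
      omega
    exact Prod.ext e1 e2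

theorem stair_card (n : ℕ) : (Stair n).card = catalan n := by
  induction n using Nat.strong_induction_on with
  | _ n ih =>
    match n with
    | 0 => rw [stair_zero, catalan_zero]
    | Nat.succ m =>
      rw [stair_succ m, catalan_succ,
        Fin.sum_univ_eq_sum_range (fun i => catalan i * catalan (m - i)) (m + 1)]
      apply Finset.sum_congr rfl
      intro k hk
      have hkm := Finset.mem_range.1 hk
      rw [ih k (by omega), ih (m - k) (by omega)]

lemma card_av123_eq_stair (n : ℕ) : (AV123 n).card = (Stair n).card := by
  apply Finset.card_bij
    (fun π _ => fun i : Fin n => (⟨rmin π i, by have := rmin_add_le π i; omega⟩ : Fin (n + 1)))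
  · intro π hπ
    rw [mem_Stair]
    refine ⟨fun i j hij => Fin.le_def.2 ?_, fun i => ?_⟩
    · simp only [Fin.val_mk]; exact rmin_anti π hij
    · simp only [Fin.val_mk]; exact rmin_add_le π i
  · intro π hπ τ hτ heq
    exact L1 (Finset.mem_filter.1 hπ).2 (Finset.mem_filter.1 hτ).2
      (fun i => congrArg Fin.val (congrFun heq i))
  · intro F hF
    obtain ⟨hanti, hbound⟩ := mem_Stair.1 hF
    obtain ⟨π, hav, hrm⟩ := E1' (f := fun i => (F i : ℕ))
      (fun i j hij => Fin.le_def.1 (hanti i j hij)) (fun i => hbound i)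
    refine ⟨π, Finset.mem_filter.2 ⟨Finset.mem_univ _, hav⟩, ?_⟩
    funext i
    exact Fin.ext (by simp only [Fin.val_mk]; exact hrm i)

/-- The number of 123-avoiding permutations of `{1,…,n}` is the `n`-th Catalan
number. -/
theorem card_AV123 (n : ℕ) : (AV123 n).card = catalan n := by
  rw [card_av123_eq_stair, stair_card]
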